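/- Let S and A be nonempty finite sets. Let μ̃_h, μ̃_{h−1} : S × A → ℝ be nonnegative with Σ_{(s,a)} μ̃_h(s,a) = 1 and Σ_{(s,a)} μ̃_{h−1}(s,a) = 1; let μ̂_h, μ̂_{h−1} : S × A → ℝ be positive; let P : S × A → S → ℝ satisfy P(s | s′,a′) ≥ 0 and Σ_s P(s | s′,a′) = 1; let π : S → A → ℝ satisfy π(a | s) ≥ 0 and Σ_a π(a | s) = 1; and let w, ŵ : S × A → ℝ be nonnegative. Let (s_h, a_h) be a random element of S × A distributed according to μ̃_h, and independently let (s′, a′) be distributed according to μ̃_{h−1} and, conditionally on (s′, a′), let s″ be distributed according to P(· | s′, a′). Define the random function g : S × A → ℝ by g(s, a) = (w(s,a)/μ̂_h(s,a))·1[(s_h, a_h) = (s, a)] − (ŵ(s′,a′)/μ̂_{h−1}(s′,a′))·π(a | s)·1[s″ = s]. Then E[Σ_{(s,a)} g(s,a)²] ≤ Σ_{(s,a)} μ̃_h(s,a)·(w(s,a)/μ̂_h(s,a))² + Σ_{(s,a)} μ̃_{h−1}(s,a)·(ŵ(s,a)/μ̂_{h−1}(s,a))². -/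

import Mathlib

open MeasureTheory ProbabilityTheory

/-- Second-moment bound for the IDES stochastic gradient: with `(s_h,a_h) ∼ μ̃_h`,
independently `(s',a') ∼ μ̃_{h−1}` and `s'' ∼ P(·|s',a')`, the stochastic gradient
`g(s,a) = (w(s,a)/μ̂_h(s,a))·1[(s_h,a_h)=(s,a)]
          − (ŵ(s',a')/μ̂_{h−1}(s',a'))·π(a|s)·1[s''=s]`
satisfies `E[Σ_{(s,a)} g(s,a)²] ≤ Σ μ̃_h·(w/μ̂_h)² + Σ μ̃_{h−1}·(ŵ/μ̂_{h−1})²`. -/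
theorem stmt_17 (S A : Type) [Fintype S] [Fintype A] [Nonempty S] [Nonempty A]
    [DecidableEq S] [DecidableEq A]
    [MeasurableSpace S] [MeasurableSingletonClass S]
    [MeasurableSpace A] [MeasurableSingletonClass A]
    (μth μthprev : S × A → ℝ)
    (hμth0 : ∀ sa, 0 ≤ μth sa) (hμth1 : ∑ sa : S × A, μth sa = 1)
    (hμthprev0 : ∀ sa, 0 ≤ μthprev sa) (hμthprev1 : ∑ sa : S × A, μthprev sa = 1)
    (μhh μhhprev : S × A → ℝ) (hμhh : ∀ sa, 0 < μhh sa) (hμhhprev : ∀ sa, 0 < μhhprev sa)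
    (P : S × A → S → ℝ) (hP0 : ∀ sa s, 0 ≤ P sa s) (hP1 : ∀ sa, ∑ s, P sa s = 1)
    (π : S → A → ℝ) (hπ0 : ∀ s a, 0 ≤ π s a) (hπ1 : ∀ s, ∑ a, π s a = 1)
    (w wh : S × A → ℝ) (hw : ∀ sa, 0 ≤ w sa) (hwh : ∀ sa, 0 ≤ wh sa)
    (Ω : Type) [MeasurableSpace Ω] (Pr : Measure Ω) [IsProbabilityMeasure Pr]
    (ξ : Ω → S × A) (ζ : Ω → S × A) (σ : Ω → S)
    (hξm : Measurable ξ) (hζm : Measurable ζ) (hσm : Measurable σ)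
    (hξd : ∀ sa : S × A, Pr {ω | ξ ω = sa} = ENNReal.ofReal (μth sa))
    (hζσd : ∀ (sa : S × A) (s : S),
      Pr {ω | ζ ω = sa ∧ σ ω = s} = ENNReal.ofReal (μthprev sa * P sa s))
    (hindep : IndepFun ξ (fun ω => (ζ ω, σ ω)) Pr) :
    ∫ ω, ∑ sa : S × A,
        (w sa / μhh sa * (if ξ ω = sa then (1 : ℝ) else 0) -
          wh (ζ ω) / μhhprev (ζ ω) * π sa.1 sa.2 *
            (if σ ω = sa.1 then (1 : ℝ) else 0)) ^ 2 ∂Pr ≤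
      ∑ sa : S × A, μth sa * (w sa / μhh sa) ^ 2 +
        ∑ sa : S × A, μthprev sa * (wh sa / μhhprev sa) ^ 2 := by
  classical
  set c : S × A → ℝ := fun sa => (w sa / μhh sa) ^ 2 with hc
  set h : S × A → ℝ := fun sa => (wh sa / μhhprev sa) ^ 2 with hh
  have hc0 : ∀ sa, 0 ≤ c sa := fun sa => sq_nonneg _
  have hh0 : ∀ sa, 0 ≤ h sa := fun sa => sq_nonneg _
  have hπle1 : ∀ s a, π s a ≤ 1 := by
    intro s a
    calc π s a ≤ ∑ a', π s a' :=
          Finset.single_le_sum (fun a' _ => hπ0 s a') (Finset.mem_univ a)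
      _ = 1 := hπ1 s
  -- dominating function
  set G : Ω → ℝ := fun ω =>
    (∑ sa : S × A, c sa * (if ξ ω = sa then (1 : ℝ) else 0)) +
      ∑ sa : S × A, ∑ s : S, h sa * (if ζ ω = sa ∧ σ ω = s then (1 : ℝ) else 0) with hG
  -- pointwise bound
  have key : ∀ ω, ∑ sa : S × A,
      (w sa / μhh sa * (if ξ ω = sa then (1 : ℝ) else 0) -
        wh (ζ ω) / μhhprev (ζ ω) * π sa.1 sa.2 *
          (if σ ω = sa.1 then (1 : ℝ) else 0)) ^ 2 ≤ G ω := by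
    intro ω
    have step1 : ∑ sa : S × A,
        (w sa / μhh sa * (if ξ ω = sa then (1 : ℝ) else 0) -
          wh (ζ ω) / μhhprev (ζ ω) * π sa.1 sa.2 *
            (if σ ω = sa.1 then (1 : ℝ) else 0)) ^ 2 ≤
        (∑ sa : S × A, c sa * (if ξ ω = sa then (1 : ℝ) else 0)) +
          ∑ sa : S × A, h (ζ ω) * π sa.1 sa.2 ^ 2 *
            (if σ ω = sa.1 then (1 : ℝ) else 0) := by
      rw [← Finset.sum_add_distrib]
      apply Finset.sum_le_sum
      intro sa _
      have hind1 : (0 : ℝ) ≤ (if ξ ω = sa then (1 : ℝ) else 0) := by positivity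
      have hind2 : (0 : ℝ) ≤ (if σ ω = sa.1 then (1 : ℝ) else 0) := by positivity
      have hx : (0 : ℝ) ≤ w sa / μhh sa * (if ξ ω = sa then (1 : ℝ) else 0) :=
        mul_nonneg (div_nonneg (hw sa) (hμhh sa).le) hind1
      have hy : (0 : ℝ) ≤ wh (ζ ω) / μhhprev (ζ ω) * π sa.1 sa.2 *
          (if σ ω = sa.1 then (1 : ℝ) else 0) :=
        mul_nonneg (mul_nonneg (div_nonneg (hwh _) (hμhhprev _).le) (hπ0 _ _)) hind2
      have e1 : c sa * (if ξ ω = sa then (1 : ℝ) else 0) =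
          (w sa / μhh sa * (if ξ ω = sa then (1 : ℝ) else 0)) ^ 2 := by
        simp only [hc]; split_ifs <;> ring
      have e2 : h (ζ ω) * π sa.1 sa.2 ^ 2 * (if σ ω = sa.1 then (1 : ℝ) else 0) =
          (wh (ζ ω) / μhhprev (ζ ω) * π sa.1 sa.2 *
            (if σ ω = sa.1 then (1 : ℝ) else 0)) ^ 2 := by
        simp only [hh]; split_ifs <;> ring
      rw [e1, e2]
      nlinarith [mul_nonneg hx hy]
    have step2 : ∑ sa : S × A, h (ζ ω) * π sa.1 sa.2 ^ 2 *
        (if σ ω = sa.1 then (1 : ℝ) else 0) ≤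
        ∑ sa : S × A, ∑ s : S, h sa * (if ζ ω = sa ∧ σ ω = s then (1 : ℝ) else 0) := by
      have lhs_eq : ∑ sa : S × A, h (ζ ω) * π sa.1 sa.2 ^ 2 *
          (if σ ω = sa.1 then (1 : ℝ) else 0) =
          h (ζ ω) * ∑ a : A, π (σ ω) a ^ 2 := by
        rw [Fintype.sum_prod_type, Finset.mul_sum]
        rw [Finset.sum_eq_single (σ ω)]
        · simp [Finset.mul_sum]
        · intro s _ hs
          simp [Ne.symm hs]
        · simp
      have rhs_eq : ∑ sa : S × A, ∑ s : S, h sa *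
          (if ζ ω = sa ∧ σ ω = s then (1 : ℝ) else 0) = h (ζ ω) := by
        have inner : ∀ sa : S × A, ∑ s : S, h sa *
            (if ζ ω = sa ∧ σ ω = s then (1 : ℝ) else 0) =
            h sa * (if ζ ω = sa then (1 : ℝ) else 0) := by
          intro sa
          rw [Finset.sum_eq_single (σ ω)]
          · simp
          · intro s _ hs; simp [Ne.symm hs]
          · simp
        simp only [inner]
        rw [Finset.sum_eq_single (ζ ω)]
        · simp
        · intro sa _ hsa; simp [Ne.symm hsa]
        · simp
      rw [lhs_eq, rhs_eq]
      have hsum : ∑ a : A, π (σ ω) a ^ 2 ≤ 1 := by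
        calc ∑ a : A, π (σ ω) a ^ 2 ≤ ∑ a : A, π (σ ω) a := by
              apply Finset.sum_le_sum
              intro a _
              have := hπ0 (σ ω) a
              have := hπle1 (σ ω) a
              nlinarith
          _ = 1 := hπ1 (σ ω)
      calc h (ζ ω) * ∑ a : A, π (σ ω) a ^ 2 ≤ h (ζ ω) * 1 := by
            exact mul_le_mul_of_nonneg_left hsum (hh0 _)
        _ = h (ζ ω) := mul_one _
    calc _ ≤ _ := step1
      _ ≤ G ω := by exact add_le_add le_rfl step2
  -- integrability of G pieces
  have hint1 : ∀ sa : S × A,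
      Integrable (fun ω => c sa * (if ξ ω = sa then (1 : ℝ) else 0)) Pr := by
    intro sa
    have hmeas : MeasurableSet (ξ ⁻¹' {sa}) := hξm (measurableSet_singleton sa)
    have := (integrable_const (μ := Pr) (c sa)).indicator hmeas
    refine this.congr (Filter.Eventually.of_forall fun ω => ?_)
    simp [Set.indicator_apply, Set.mem_preimage]
  have hint2 : ∀ (sa : S × A) (s : S),
      Integrable (fun ω => h sa * (if ζ ω = sa ∧ σ ω = s then (1 : ℝ) else 0)) Pr := by
    intro sa s
    have hmeas : MeasurableSet (ζ ⁻¹' {sa} ∩ σ ⁻¹' {s}) :=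
      (hζm (measurableSet_singleton sa)).inter (hσm (measurableSet_singleton s))
    have := (integrable_const (μ := Pr) (h sa)).indicator hmeas
    refine this.congr (Filter.Eventually.of_forall fun ω => ?_)
    simp only [Set.indicator_apply, Set.mem_inter_iff, Set.mem_preimage,
      Set.mem_singleton_iff]
    split_ifs <;> simp_all
  have hGint : Integrable G Pr := by
    apply Integrable.add
    · exact integrable_finset_sum _ fun sa _ => hint1 sa
    · exact integrable_finset_sum _ fun sa _ =>
        integrable_finset_sum _ fun s _ => hint2 sa s
  -- bound the integral
  have hmono : ∫ ω, ∑ sa : S × A,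
      (w sa / μhh sa * (if ξ ω = sa then (1 : ℝ) else 0) -
        wh (ζ ω) / μhhprev (ζ ω) * π sa.1 sa.2 *
          (if σ ω = sa.1 then (1 : ℝ) else 0)) ^ 2 ∂Pr ≤ ∫ ω, G ω ∂Pr := by
    apply integral_mono_of_nonneg
    · exact Filter.Eventually.of_forall fun ω =>
        Finset.sum_nonneg fun sa _ => sq_nonneg _
    · exact hGint
    · exact Filter.Eventually.of_forall key
  refine hmono.trans ?_
  -- compute ∫ G
  have hI1 : ∀ sa : S × A,
      ∫ ω, c sa * (if ξ ω = sa then (1 : ℝ) else 0) ∂Pr = μth sa * c sa := by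
    intro sa
    have hmeas : MeasurableSet (ξ ⁻¹' {sa}) := hξm (measurableSet_singleton sa)
    have heq : (fun ω => c sa * (if ξ ω = sa then (1 : ℝ) else 0)) =
        (ξ ⁻¹' {sa}).indicator (fun _ => c sa) := by
      funext ω; simp [Set.indicator_apply, Set.mem_preimage]
    rw [heq, integral_indicator_const _ hmeas]
    have hset : ξ ⁻¹' {sa} = {ω | ξ ω = sa} := by
      ext ω; simp
    rw [hset, measureReal_def, hξd sa, ENNReal.toReal_ofReal (hμth0 sa)]
    simp [mul_comm]
  have hI2 : ∀ (sa : S × A) (s : S),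
      ∫ ω, h sa * (if ζ ω = sa ∧ σ ω = s then (1 : ℝ) else 0) ∂Pr =
        μthprev sa * P sa s * h sa := by
    intro sa s
    have hmeas : MeasurableSet (ζ ⁻¹' {sa} ∩ σ ⁻¹' {s}) :=
      (hζm (measurableSet_singleton sa)).inter (hσm (measurableSet_singleton s))
    have heq : (fun ω => h sa * (if ζ ω = sa ∧ σ ω = s then (1 : ℝ) else 0)) =
        (ζ ⁻¹' {sa} ∩ σ ⁻¹' {s}).indicator (fun _ => h sa) := by
      funext ω
      simp only [Set.indicator_apply, Set.mem_inter_iff, Set.mem_preimage,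
        Set.mem_singleton_iff]
      split_ifs <;> simp_all
    rw [heq, integral_indicator_const _ hmeas]
    have hset : ζ ⁻¹' {sa} ∩ σ ⁻¹' {s} = {ω | ζ ω = sa ∧ σ ω = s} := by
      ext ω; simp
    rw [hset, measureReal_def, hζσd sa s,
      ENNReal.toReal_ofReal (mul_nonneg (hμthprev0 sa) (hP0 sa s))]
    simp [mul_comm]
  have hGval : ∫ ω, G ω ∂Pr =
      (∑ sa : S × A, μth sa * c sa) + ∑ sa : S × A, μthprev sa * h sa := by
    rw [hG]
    rw [integral_add (integrable_finset_sum _ fun sa _ => hint1 sa)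
      (integrable_finset_sum _ fun sa _ =>
        integrable_finset_sum _ fun s _ => hint2 sa s)]
    congr 1
    · rw [integral_finset_sum _ fun sa _ => hint1 sa]
      exact Finset.sum_congr rfl fun sa _ => hI1 sa
    · rw [integral_finset_sum _ fun sa _ =>
        integrable_finset_sum _ fun s _ => hint2 sa s]
      refine Finset.sum_congr rfl fun sa _ => ?_
      rw [integral_finset_sum _ fun s _ => hint2 sa s]
      have : ∑ s : S, μthprev sa * P sa s * h sa = μthprev sa * h sa := by
        rw [← Finset.sum_mul, ← Finset.mul_sum, hP1 sa, mul_one]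
      rw [Finset.sum_congr rfl fun s _ => hI2 sa s, this]
  rw [hGval]
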